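/- arXiv:2105.13203 — 7 statements merged into one kernel-verified Lean document; each statement's English description precedes it below -/
import Mathlib

section
/- Let X ⊆ ℝⁿ and Y ⊆ ℝᵐ be nonempty convex compact sets and let F : ℝⁿ × ℝᵐ → ℝ be continuous on X × Y, convex in its first argument on X for every fixed y ∈ Y, and concave in its second argument on Y for every fixed x ∈ X. Let (x_t)_{t=1}^T ⊆ X and (y_t)_{t=1}^T ⊆ Y be arbitrary sequences, and suppose for each t there exist f_t ∈ ℝⁿ and g_t ∈ ℝᵐ such that F(x, y_t) ≥ F(x_t, y_t) + ⟨f_t, x − x_t⟩ for all x ∈ X and F(x_t, y) ≤ F(x_t, y_t) + ⟨g_t, y − y_t⟩ for all y ∈ Y. Set x̄_T = (1/T) Σ_{t=1}^T x_t and ȳ_T = (1/T) Σ_{t=1}^T y_t, and define the regrets R_{T,x} = Σ_{t=1}^T ⟨f_t, x_t⟩ − inf_{x∈X} Σ_{t=1}^T ⟨f_t, x⟩ and R_{T,y} = sup_{y∈Y} Σ_{t=1}^T ⟨g_t, y⟩ − Σ_{t=1}^T ⟨g_t, y_t⟩. Then sup_{y∈Y} F(x̄_T, y) − inf_{x∈X}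 F(x, ȳ_T) ≤ (R_{T,x} + R_{T,y}) / T. -/
open scoped RealInnerProductSpace
open Finset

noncomputable section

/-- the folk theorem connecting regret minimization to saddle-point solving:
for a convex-concave subdifferentiable payoff `F` on nonempty convex compact sets `X`, `Y`,
the duality gap of the uniform average iterates is bounded by the sum of the two players'
linearized regrets divided by the number of rounds `T`. -/
theorem folk_theorem (n m T : ℕ) (hT : 1 ≤ T)
    (X : Set (EuclideanSpace ℝ (Fin n))) (Y : Set (EuclideanSpace ℝ (Fin m)))
    (hXne : X.Nonempty) (hXconv : Convex ℝ X) (hXcomp : IsCompact X)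
    (hYne : Y.Nonempty) (hYconv : Convex ℝ Y) (hYcomp : IsCompact Y)
    (F : EuclideanSpace ℝ (Fin n) → EuclideanSpace ℝ (Fin m) → ℝ)
    (hFcont : ContinuousOn (fun p => F p.1 p.2) (X ×ˢ Y))
    (hFconv : ∀ y ∈ Y, ConvexOn ℝ X (fun x' => F x' y))
    (hFconc : ∀ x ∈ X, ConcaveOn ℝ Y (fun y' => F x y'))
    (x : Fin T → EuclideanSpace ℝ (Fin n)) (y : Fin T → EuclideanSpace ℝ (Fin m))
    (hx : ∀ t, x t ∈ X) (hy : ∀ t, y t ∈ Y)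
    (f : Fin T → EuclideanSpace ℝ (Fin n)) (g : Fin T → EuclideanSpace ℝ (Fin m))
    -- `f t` is a subgradient of `F (·, y t)` at `x t`
    (hf : ∀ t, ∀ x' ∈ X, F (x t) (y t) + ⟪f t, x' - x t⟫ ≤ F x' (y t))
    -- `g t` is a supergradient of `F (x t, ·)` at `y t`
    (hg : ∀ t, ∀ y' ∈ Y, F (x t) y' ≤ F (x t) (y t) + ⟪g t, y' - y t⟫)
    (xbar : EuclideanSpace ℝ (Fin n)) (ybar : EuclideanSpace ℝ (Fin m))
    (hxbar : xbar = (T : ℝ)⁻¹ • ∑ t, x t)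
    (hybar : ybar = (T : ℝ)⁻¹ • ∑ t, y t)
    (RTx RTy : ℝ)
    (hRx : RTx = (∑ t, ⟪f t, x t⟫) - sInf ((fun x' => ∑ t, ⟪f t, x'⟫) '' X))
    (hRy : RTy = sSup ((fun y' => ∑ t, ⟪g t, y'⟫) '' Y) - ∑ t, ⟪g t, y t⟫) :
    sSup ((fun y' => F xbar y') '' Y) - sInf ((fun x' => F x' ybar) '' X)
      ≤ (RTx + RTy) / T := by

  have hT0 : (0:ℝ) < T := by exact_mod_cast Nat.lt_of_lt_of_le Nat.zero_lt_one hT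
  have hw : ∀ i ∈ (univ : Finset (Fin T)), (0:ℝ) ≤ (T:ℝ)⁻¹ := fun _ _ => by positivity
  have hw1 : ∑ _i : Fin T, (T:ℝ)⁻¹ = 1 := by
    simp [Finset.sum_const, Finset.card_univ]
    field_simp
  have hxbar' : xbar = ∑ t, (T:ℝ)⁻¹ • x t := by rw [hxbar, Finset.smul_sum]
  have hybar' : ybar = ∑ t, (T:ℝ)⁻¹ • y t := by rw [hybar, Finset.smul_sum]
  have hxbarX : xbar ∈ X := by
    rw [hxbar']
    exact hXconv.sum_mem hw hw1 (fun i _ => hx i)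
  have hybarY : ybar ∈ Y := by
    rw [hybar']
    exact hYconv.sum_mem hw hw1 (fun i _ => hy i)
  -- boundedness facts for inner-product sums
  have hbddf : BddBelow ((fun x' => ∑ t, ⟪f t, x'⟫) '' X) := by
    apply (hXcomp.image_of_continuousOn _).bddBelow
    exact (continuous_finset_sum univ fun t _ =>
      (continuous_const.inner continuous_id)).continuousOn
  have hbddg : BddAbove ((fun y' => ∑ t, ⟪g t, y'⟫) '' Y) := by
    apply (hYcomp.image_of_continuousOn _).bddAbove
    exact (continuous_finset_sum univ fun t _ =>
      (continuous_const.inner continuous_id)).continuousOn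
  have key : ∀ y' ∈ Y, ∀ x' ∈ X, F xbar y' - F x' ybar ≤ (RTx + RTy) / T := by
    intro y' hy' x' hx'
    have h1 : F xbar y' ≤ ∑ t, (T:ℝ)⁻¹ * F (x t) y' := by
      rw [hxbar']
      exact (hFconv y' hy').map_sum_le hw hw1 (fun i _ => hx i)
    have h2 : ∑ t, (T:ℝ)⁻¹ * F x' (y t) ≤ F x' ybar := by
      rw [hybar']
      exact (hFconc x' hx').le_map_sum hw hw1 (fun i _ => hy i)
    have h3 : ∀ t, F (x t) y' - F x' (y t) ≤
        (⟪g t, y'⟫ - ⟪g t, y t⟫) + (⟪f t, x t⟫ - ⟪f t, x'⟫) := by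
      intro t
      have a1 := hf t x' hx'
      have a2 := hg t y' hy'
      rw [inner_sub_right] at a1 a2
      linarith
    have hgb : ∑ t, ⟪g t, y'⟫ ≤ sSup ((fun y' => ∑ t, ⟪g t, y'⟫) '' Y) :=
      le_csSup hbddg ⟨y', hy', rfl⟩
    have hfb : sInf ((fun x' => ∑ t, ⟪f t, x'⟫) '' X) ≤ ∑ t, ⟪f t, x'⟫ :=
      csInf_le hbddf ⟨x', hx', rfl⟩
    have h4 : ∑ t, (F (x t) y' - F x' (y t)) ≤ RTx + RTy := by
      calc ∑ t, (F (x t) y' - F x' (y t))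
          ≤ ∑ t, ((⟪g t, y'⟫ - ⟪g t, y t⟫) + (⟪f t, x t⟫ - ⟪f t, x'⟫)) :=
            Finset.sum_le_sum (fun t _ => h3 t)
        _ = (∑ t, ⟪g t, y'⟫) - (∑ t, ⟪g t, y t⟫) + ((∑ t, ⟪f t, x t⟫) - ∑ t, ⟪f t, x'⟫) := by
            rw [Finset.sum_add_distrib, Finset.sum_sub_distrib, Finset.sum_sub_distrib]
        _ ≤ RTx + RTy := by rw [hRx, hRy]; linarith
    have h5 : F xbar y' - F x' ybar ≤ (T:ℝ)⁻¹ * ∑ t, (F (x t) y' - F x' (y t)) := by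
      rw [Finset.mul_sum]
      have : ∀ t : Fin T, (T:ℝ)⁻¹ * (F (x t) y' - F x' (y t))
          = (T:ℝ)⁻¹ * F (x t) y' - (T:ℝ)⁻¹ * F x' (y t) := fun t => by ring
      simp only [this]
      rw [Finset.sum_sub_distrib]
      linarith
    calc F xbar y' - F x' ybar ≤ (T:ℝ)⁻¹ * ∑ t, (F (x t) y' - F x' (y t)) := h5
      _ ≤ (T:ℝ)⁻¹ * (RTx + RTy) := by
          apply mul_le_mul_of_nonneg_left h4 (by positivity)
      _ = (RTx + RTy) / T := by rw [div_eq_inv_mul]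
  have hXne' : ((fun x' => F x' ybar) '' X).Nonempty := hXne.image _
  have hYne' : ((fun y' => F xbar y') '' Y).Nonempty := hYne.image _
  rw [sub_le_iff_le_add]
  apply csSup_le hYne'
  rintro a ⟨y', hy', rfl⟩
  rw [add_comm, ← sub_le_iff_le_add]
  apply le_csInf hXne'
  rintro b ⟨x', hx', rfl⟩
  linarith [key y' hy' x' hx']
end
end

section
/- Let X ⊆ ℝⁿ and Y ⊆ ℝᵐ be nonempty convex compact sets and let F : ℝⁿ × ℝᵐ → ℝ be continuous on X × Y, convex in its first argument on X for every fixed y ∈ Y, and concave in its second argument on Y for every fixed x ∈ X. Let (x_t)_{t=1}^T ⊆ X and (y_t)_{t=1}^T ⊆ Y be arbitrary sequences, suppose for each t there exist f_t ∈ ℝⁿ and g_t ∈ ℝᵐ such that F(x, y_t) ≥ F(x_t, y_t) + ⟨f_t, x − x_t⟩ for all x ∈ X and F(x_t, y) ≤ F(x_t, y_t) + ⟨g_t, y − y_t⟩ for all y ∈ Y, and let ω_1, …, ω_T > 0 be positive weights with S_T = Σ_{t=1}^T ω_t. Set x̄_T = (1/S_T) Σ_{t=1}^T ω_t x_t and ȳ_T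 = (1/S_T) Σ_{t=1}^T ω_t y_t. Then sup_{y∈Y} F(x̄_T, y) − inf_{x∈X} F(x, ȳ_T) ≤ (1/S_T) · [ (sup_{y∈Y} Σ_{t=1}^T ω_t ⟨g_t, y⟩ − Σ_{t=1}^T ω_t ⟨g_t, y_t⟩) + (Σ_{t=1}^T ω_t ⟨f_t, x_t⟩ − inf_{x∈X} Σ_{t=1}^T ω_t ⟨f_t, x⟩) ]. -/
open scoped RealInnerProductSpace
open Finset

noncomputable section

/-- the weighted-average generalization of the folk theorem for saddle-point
solving: the duality gap of the `ω`-weighted average iterates is bounded by the sum of the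
two players' `ω`-weighted linearized regrets divided by the total weight `S_T`. -/
theorem weighted_folk_theorem (n m T : ℕ) (hT : 1 ≤ T)
    (X : Set (EuclideanSpace ℝ (Fin n))) (Y : Set (EuclideanSpace ℝ (Fin m)))
    (hXne : X.Nonempty) (hXconv : Convex ℝ X) (hXcomp : IsCompact X)
    (hYne : Y.Nonempty) (hYconv : Convex ℝ Y) (hYcomp : IsCompact Y)
    (F : EuclideanSpace ℝ (Fin n) → EuclideanSpace ℝ (Fin m) → ℝ)
    (hFcont : ContinuousOn (fun p => F p.1 p.2) (X ×ˢ Y))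
    (hFconv : ∀ y ∈ Y, ConvexOn ℝ X (fun x' => F x' y))
    (hFconc : ∀ x ∈ X, ConcaveOn ℝ Y (fun y' => F x y'))
    (x : Fin T → EuclideanSpace ℝ (Fin n)) (y : Fin T → EuclideanSpace ℝ (Fin m))
    (hx : ∀ t, x t ∈ X) (hy : ∀ t, y t ∈ Y)
    (f : Fin T → EuclideanSpace ℝ (Fin n)) (g : Fin T → EuclideanSpace ℝ (Fin m))
    -- `f t` is a subgradient of `F (·, y t)` at `x t`
    (hf : ∀ t, ∀ x' ∈ X, F (x t) (y t) + ⟪f t, x' - x t⟫ ≤ F x' (y t))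
    -- `g t` is a supergradient of `F (x t, ·)` at `y t`
    (hg : ∀ t, ∀ y' ∈ Y, F (x t) y' ≤ F (x t) (y t) + ⟪g t, y' - y t⟫)
    (ω : Fin T → ℝ) (hω : ∀ t, 0 < ω t) (S : ℝ) (hS : S = ∑ t, ω t)
    (xbar : EuclideanSpace ℝ (Fin n)) (ybar : EuclideanSpace ℝ (Fin m))
    (hxbar : xbar = S⁻¹ • ∑ t, ω t • x t)
    (hybar : ybar = S⁻¹ • ∑ t, ω t • y t) :
    sSup ((fun y' => F xbar y') '' Y) - sInf ((fun x' => F x' ybar) '' X)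
      ≤ (1 / S) *
        ((sSup ((fun y' => ∑ t, ω t * ⟪g t, y'⟫) '' Y) - ∑ t, ω t * ⟪g t, y t⟫)
          + ((∑ t, ω t * ⟪f t, x t⟫) - sInf ((fun x' => ∑ t, ω t * ⟪f t, x'⟫) '' X))) := by
  have hSpos : 0 < S := by
    rw [hS]
    exact Finset.sum_pos (fun t _ => hω t) ⟨⟨0, hT⟩, Finset.mem_univ _⟩
  have hSne : (S : ℝ) ≠ 0 := ne_of_gt hSpos
  set C := ∑ t, ω t * F (x t) (y t) with hC
  have hcontg : Continuous fun y' : EuclideanSpace ℝ (Fin m) => ∑ t, ω t * ⟪g t, y'⟫ :=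
    continuous_finset_sum _ fun t _ =>
      continuous_const.mul (continuous_const.inner continuous_id)
  have hcontf : Continuous fun x' : EuclideanSpace ℝ (Fin n) => ∑ t, ω t * ⟪f t, x'⟫ :=
    continuous_finset_sum _ fun t _ =>
      continuous_const.mul (continuous_const.inner continuous_id)
  have hbddg : BddAbove ((fun y' => ∑ t, ω t * ⟪g t, y'⟫) '' Y) :=
    (hYcomp.image_of_continuousOn hcontg.continuousOn).bddAbove
  have hbddf : BddBelow ((fun x' => ∑ t, ω t * ⟪f t, x'⟫) '' X) :=
    (hXcomp.image_of_continuousOn hcontf.continuousOn).bddBelow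
  set SG := sSup ((fun y' => ∑ t, ω t * ⟪g t, y'⟫) '' Y) with hSG
  set SF := sInf ((fun x' => ∑ t, ω t * ⟪f t, x'⟫) '' X) with hSF
  have hsumpos : 0 < ∑ t, ω t := hS ▸ hSpos
  -- upper bound on sSup
  have hub : ∀ y' ∈ Y, F xbar y' ≤ S⁻¹ * (C + (SG - ∑ t, ω t * ⟪g t, y t⟫)) := by
    intro y' hy'
    have h1 := (hFconv y' hy').map_centerMass_le (t := Finset.univ)
      (fun t _ => (hω t).le) hsumpos (fun t _ => hx t)
    rw [Finset.centerMass, Finset.centerMass] at h1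
    have hxb : xbar = Finset.univ.centerMass ω x := by
      rw [hxbar, Finset.centerMass, hS]
    rw [Finset.centerMass] at hxb
    rw [← hxb] at h1
    have h2 : ∑ t, ω t • ((fun x' => F x' y') ∘ x) t
        ≤ C + ((∑ t, ω t * ⟪g t, y'⟫) - ∑ t, ω t * ⟪g t, y t⟫) := by
      have : ∀ t : Fin T, ω t • ((fun x' => F x' y') ∘ x) t
          ≤ ω t * F (x t) (y t) + (ω t * ⟪g t, y'⟫ - ω t * ⟪g t, y t⟫) := by
        intro t
        have h3 := hg t y' hy'
        rw [inner_sub_right] at h3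
        have := (hω t).le
        simp only [Function.comp, smul_eq_mul]
        nlinarith
      calc ∑ t, ω t • ((fun x' => F x' y') ∘ x) t
          ≤ ∑ t, (ω t * F (x t) (y t) + (ω t * ⟪g t, y'⟫ - ω t * ⟪g t, y t⟫)) :=
            Finset.sum_le_sum fun t _ => this t
        _ = C + ((∑ t, ω t * ⟪g t, y'⟫) - ∑ t, ω t * ⟪g t, y t⟫) := by
            rw [Finset.sum_add_distrib, Finset.sum_sub_distrib]
    have h4 : (∑ t, ω t * ⟪g t, y'⟫) ≤ SG := le_csSup hbddg ⟨y', hy', rfl⟩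
    have h5 : ∑ t, ω t • ((fun x' => F x' y') ∘ x) t
        ≤ C + (SG - ∑ t, ω t * ⟪g t, y t⟫) := by linarith
    calc F xbar y' ≤ (∑ t, ω t)⁻¹ • ∑ t, ω t • ((fun x' => F x' y') ∘ x) t := h1
      _ ≤ S⁻¹ * (C + (SG - ∑ t, ω t * ⟪g t, y t⟫)) := by
          rw [smul_eq_mul, ← hS]
          exact mul_le_mul_of_nonneg_left h5 (inv_nonneg.mpr hSpos.le)
  -- lower bound on sInf
  have hlb : ∀ x' ∈ X, S⁻¹ * (C - ((∑ t, ω t * ⟪f t, x t⟫) - SF)) ≤ F x' ybar := by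
    intro x' hx'
    have h1 := (hFconc x' hx').le_map_centerMass (t := Finset.univ)
      (fun t _ => (hω t).le) hsumpos (fun t _ => hy t)
    rw [Finset.centerMass, Finset.centerMass] at h1
    have hyb : ybar = (∑ t, ω t)⁻¹ • ∑ t, ω t • y t := by rw [hybar, hS]
    rw [← hyb] at h1
    have h2 : C + (SF - ∑ t, ω t * ⟪f t, x t⟫)
        ≤ ∑ t, ω t • ((fun y' => F x' y') ∘ y) t := by
      have key : ∀ t : Fin T, ω t * F (x t) (y t) + (ω t * ⟪f t, x'⟫ - ω t * ⟪f t, x t⟫)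
          ≤ ω t • ((fun y' => F x' y') ∘ y) t := by
        intro t
        have h3 := hf t x' hx'
        rw [inner_sub_right] at h3
        have := (hω t).le
        simp only [Function.comp, smul_eq_mul]
        nlinarith
      have h4 : SF ≤ ∑ t, ω t * ⟪f t, x'⟫ := csInf_le hbddf ⟨x', hx', rfl⟩
      calc C + (SF - ∑ t, ω t * ⟪f t, x t⟫)
          ≤ C + ((∑ t, ω t * ⟪f t, x'⟫) - ∑ t, ω t * ⟪f t, x t⟫) := by linarith
        _ = ∑ t, (ω t * F (x t) (y t) + (ω t * ⟪f t, x'⟫ - ω t * ⟪f t, x t⟫)) := by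
            rw [Finset.sum_add_distrib, Finset.sum_sub_distrib]
        _ ≤ ∑ t, ω t • ((fun y' => F x' y') ∘ y) t :=
            Finset.sum_le_sum fun t _ => key t
    calc S⁻¹ * (C - ((∑ t, ω t * ⟪f t, x t⟫) - SF))
        ≤ S⁻¹ * (∑ t, ω t • ((fun y' => F x' y') ∘ y) t) := by
          apply mul_le_mul_of_nonneg_left _ (inv_nonneg.mpr hSpos.le)
          linarith
      _ = (∑ t, ω t)⁻¹ • ∑ t, ω t • ((fun y' => F x' y') ∘ y) t := by
          rw [smul_eq_mul, hS]
      _ ≤ F x' ybar := h1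
  have hSup : sSup ((fun y' => F xbar y') '' Y)
      ≤ S⁻¹ * (C + (SG - ∑ t, ω t * ⟪g t, y t⟫)) :=
    csSup_le (hYne.image _) (by rintro _ ⟨y', hy', rfl⟩; exact hub y' hy')
  have hInf : S⁻¹ * (C - ((∑ t, ω t * ⟪f t, x t⟫) - SF))
      ≤ sInf ((fun x' => F x' ybar) '' X) :=
    le_csInf (hXne.image _) (by rintro _ ⟨x', hx', rfl⟩; exact hlb x' hx')
  have hring : S⁻¹ * (C + (SG - ∑ t, ω t * ⟪g t, y t⟫))
      - S⁻¹ * (C - ((∑ t, ω t * ⟪f t, x t⟫) - SF))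
      = (1 / S) * ((SG - ∑ t, ω t * ⟪g t, y t⟫)
        + ((∑ t, ω t * ⟪f t, x t⟫) - SF)) := by
    field_simp
    ring
  linarith
end
end

section
/- Let H be a real Hilbert space and C ⊆ H a nonempty closed convex cone with polar cone C° = {z ∈ H : ⟨z, w⟩ ≤ 0 for all w ∈ C}. Then for every u ∈ H, the distance from u to C satisfies dist(u, C) = sup{ ⟨u, w⟩ : w ∈ C°, ‖w‖ ≤ 1 }, and this supremum is attained. -/
open scoped RealInnerProductSpace

noncomputable section

/-- for a nonempty closed convex cone `C` in a real Hilbert space with polar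
cone `C°`, the distance from any `u` to `C` equals `sup { ⟪u, w⟫ : w ∈ C°, ‖w‖ ≤ 1 }`,
and this supremum is attained (i.e. `dist(u, C)` is the greatest element of that set of
inner products). -/
theorem dist_to_cone_eq_sup_inner {H : Type*} [NormedAddCommGroup H] [InnerProductSpace ℝ H]
    [CompleteSpace H]
    (C : Set H) (hne : C.Nonempty) (hclosed : IsClosed C) (hconv : Convex ℝ C)
    (hcone : ∀ c : ℝ, 0 ≤ c → ∀ w ∈ C, c • w ∈ C) (u : H) :
    IsGreatest ((fun w => ⟪u, w⟫) '' {w : H | (∀ z ∈ C, ⟪w, z⟫ ≤ 0) ∧ ‖w‖ ≤ 1})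
      (Metric.infDist u C) := by
  -- projection
  obtain ⟨p, hpC, hpmin⟩ :=
    exists_norm_eq_iInf_of_complete_convex hne (hclosed.isComplete) hconv u
  have hvar : ∀ w ∈ C, ⟪u - p, w - p⟫ ≤ 0 :=
    (norm_eq_iInf_iff_real_inner_le_zero hconv hpC).mp hpmin
  have hdist : Metric.infDist u C = ‖u - p‖ := by
    rw [Metric.infDist_eq_iInf, hpmin]
    congr 1; ext w; rw [dist_eq_norm]
  have h0C : (0 : H) ∈ C := by
    obtain ⟨w, hw⟩ := hne
    simpa using hcone 0 le_rfl w hw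
  -- ⟪u - p, p⟫ = 0
  have hp0 : ⟪u - p, p⟫ = 0 := by
    have h1 := hvar 0 h0C
    have h2 := hvar ((2:ℝ) • p) (hcone 2 (by norm_num) p hpC)
    simp only [zero_sub, inner_neg_right, neg_nonpos] at h1
    have : (2 : ℝ) • p - p = p := by
      rw [two_smul]; abel
    rw [this] at h2
    linarith
  -- u - p is in the polar cone
  have hpolar : ∀ z ∈ C, ⟪u - p, z⟫ ≤ 0 := by
    intro z hz
    have hzp : z + p ∈ C := by
      have hmid : (1/2 : ℝ) • z + (1/2 : ℝ) • p ∈ C :=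
        hconv hz hpC (by norm_num) (by norm_num) (by norm_num)
      have := hcone 2 (by norm_num) _ hmid
      simpa [smul_add, smul_smul] using this
    have := hvar (z + p) hzp
    simpa using this
  constructor
  · -- membership: the sup is attained
    by_cases hv : u - p = 0
    · refine ⟨0, ⟨fun z _ => by simp, by simp⟩, ?_⟩
      have : u = p := by rwa [sub_eq_zero] at hv
      simp [hdist, hv]
    · refine ⟨‖u - p‖⁻¹ • (u - p), ⟨fun z hz => ?_, ?_⟩, ?_⟩
      · rw [real_inner_smul_left]
        exact mul_nonpos_of_nonneg_of_nonpos (by positivity) (hpolar z hz)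
      · rw [norm_smul, norm_inv, norm_norm,
          inv_mul_cancel₀ (norm_ne_zero_iff.mpr hv)]
      · have hu : u = (u - p) + p := by abel
        rw [hdist]
        calc ⟪u, ‖u - p‖⁻¹ • (u - p)⟫
            = ‖u - p‖⁻¹ * ⟪(u - p) + p, u - p⟫ := by
              rw [real_inner_smul_right, ← hu]
          _ = ‖u - p‖⁻¹ * (‖u - p‖ ^ 2 + ⟪p, u - p⟫) := by
              rw [inner_add_left, real_inner_self_eq_norm_sq]
          _ = ‖u - p‖ := by
              rw [real_inner_comm, hp0, add_zero, sq, ← mul_assoc,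
                inv_mul_cancel₀ (norm_ne_zero_iff.mpr hv), one_mul]
  · -- upper bound
    rintro x ⟨w, ⟨hwpol, hwnorm⟩, rfl⟩
    have hu : u = (u - p) + p := by abel
    calc ⟪u, w⟫ = ⟪u - p, w⟫ + ⟪p, w⟫ := by rw [← inner_add_left, ← hu]
      _ ≤ ⟪u - p, w⟫ := by
          have := hwpol p hpC
          rw [real_inner_comm] at this
          linarith
      _ ≤ ‖u - p‖ * ‖w‖ := real_inner_le_norm _ _
      _ ≤ ‖u - p‖ * 1 := by
          exact mul_le_mul_of_nonneg_left hwnorm (norm_nonneg _)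
      _ = Metric.infDist u C := by rw [hdist, mul_one]
end
end

section
/- Let Δ(n) be the probability simplex in ℝⁿ, C = cone({1} × Δ(n)) = {α·(1, x) : α ≥ 0, x ∈ Δ(n)} ⊆ ℝ^{1+n}, and C° = {(ỹ, ŷ) ∈ ℝ × ℝⁿ : ŷ_i ≤ −ỹ ∀i} its polar cone. For u = (ũ, û) ∈ ℝ^{1+n}, let (ỹ*, ŷ*) = π_{C°}(u) be the metric projection of u onto C°. Then ŷ*_i = min{−ỹ*, û_i} for every i, and the first coordinate ỹ* satisfies the equation ỹ* + Σ_{i=1}^n max{û_i + ỹ*, 0} = ũ. -/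
open scoped RealInnerProductSpace
open Finset

noncomputable section

/-- `ℝ^{1+n}`, with its first coordinate a scalar block, as a Euclidean (L2) space. -/
abbrev Rone (n : ℕ) := WithLp 2 (ℝ × EuclideanSpace ℝ (Fin n))

/-- `p` is a nearest point to `u` in `C` (the metric projection of `u` onto `C`). -/
def IsProjOn {H : Type*} [NormedAddCommGroup H] (C : Set H) (u p : H) : Prop :=
  p ∈ C ∧ ∀ w ∈ C, ‖u - p‖ ≤ ‖u - w‖

private lemma Rone.normsq {n : ℕ} (x : Rone n) : ‖x‖ ^ 2 = x.ofLp.1 ^ 2 + ∑ i, (x.ofLp.2 i) ^ 2 := by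
  rw [← real_inner_self_eq_norm_sq, WithLp.prod_inner_apply, PiLp.inner_apply]
  simp [RCLike.inner_apply, sq]

private lemma Rone.innerformula {n : ℕ} (x y : Rone n) :
    ⟪x, y⟫ = x.ofLp.1 * y.ofLp.1 + ∑ i, x.ofLp.2 i * y.ofLp.2 i := by
  rw [WithLp.prod_inner_apply, PiLp.inner_apply]
  simp [RCLike.inner_apply, mul_comm]

/-- let `C° = {(ỹ, ŷ) ∈ ℝ × ℝⁿ : ŷ_i ≤ −ỹ ∀i}` be the polar cone of
`cone({1} × Δ(n))`, and let `(ỹ*, ŷ*)` be the metric projection of `u = (ũ, û)` onto `C°`.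
Then `ŷ*_i = min(−ỹ*, û_i)` for every `i`, and `ỹ* + Σ_i max(û_i + ỹ*, 0) = ũ`. -/
theorem projection_onto_polar_of_simplex_cone (n : ℕ) (u p : Rone n)
    (hproj : IsProjOn {z : Rone n | ∀ i, z.ofLp.2 i ≤ -z.ofLp.1} u p) :
    (∀ i, p.ofLp.2 i = min (-p.ofLp.1) (u.ofLp.2 i)) ∧
    p.ofLp.1 + ∑ i, max (u.ofLp.2 i + p.ofLp.1) 0 = u.ofLp.1 := by
  obtain ⟨hpK, hmin⟩ := hproj
  have hpK' : ∀ i, p.ofLp.2 i ≤ -p.ofLp.1 := hpK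
  -- Part 1: each coordinate of p.ofLp.2
  have part1 : ∀ i, p.ofLp.2 i = min (-p.ofLp.1) (u.ofLp.2 i) := by
    intro i
    set m := min (-p.ofLp.1) (u.ofLp.2 i) with hm
    set w : Rone n := (WithLp.equiv 2 _).symm (p.ofLp.1,
      (WithLp.equiv 2 _).symm (fun j => if j = i then m else p.ofLp.2 j)) with hwdef
    have hw1 : w.ofLp.1 = p.ofLp.1 := rfl
    have hw2 : ∀ j, w.ofLp.2 j = if j = i then m else p.ofLp.2 j := fun _ => rfl
    have hwK : w ∈ {z : Rone n | ∀ i, z.ofLp.2 i ≤ -z.ofLp.1} := by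
      intro j
      rw [hw2, hw1]
      by_cases hj : j = i
      · simpa [hj, hm] using min_le_left (-p.ofLp.1) (u.ofLp.2 i)
      · simpa [hj] using hpK' j
    have h2 : ‖u - p‖ ≤ ‖u - w‖ := hmin w hwK
    have h3 : ‖u - p‖ ^ 2 ≤ ‖u - w‖ ^ 2 := pow_le_pow_left₀ (norm_nonneg _) h2 2
    rw [Rone.normsq, Rone.normsq] at h3
    have h1eq : ((u - w).ofLp.1) = ((u - p).ofLp.1) := rfl
    have hsplitp : ∑ j, ((u - p).ofLp.2 j) ^ 2
        = ((u - p).ofLp.2 i) ^ 2 + ∑ j ∈ univ.erase i, ((u - p).ofLp.2 j) ^ 2 :=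
      (Finset.add_sum_erase _ _ (mem_univ i)).symm
    have hsplitw : ∑ j, ((u - w).ofLp.2 j) ^ 2
        = ((u - w).ofLp.2 i) ^ 2 + ∑ j ∈ univ.erase i, ((u - w).ofLp.2 j) ^ 2 :=
      (Finset.add_sum_erase _ _ (mem_univ i)).symm
    have heqrest : ∑ j ∈ univ.erase i, ((u - w).ofLp.2 j) ^ 2
        = ∑ j ∈ univ.erase i, ((u - p).ofLp.2 j) ^ 2 := by
      refine Finset.sum_congr rfl fun j hj => ?_
      have hji : j ≠ i := Finset.ne_of_mem_erase hj
      have : (u - w).ofLp.2 j = (u - p).ofLp.2 j := by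
        show u.ofLp.2 j - w.ofLp.2 j = u.ofLp.2 j - p.ofLp.2 j
        rw [hw2, if_neg hji]
      rw [this]
    rw [hsplitp, hsplitw, h1eq, heqrest] at h3
    have key : (u.ofLp.2 i - p.ofLp.2 i) ^ 2 ≤ (u.ofLp.2 i - m) ^ 2 := by
      have e1 : (u - p).ofLp.2 i = u.ofLp.2 i - p.ofLp.2 i := rfl
      have e2 : (u - w).ofLp.2 i = u.ofLp.2 i - m := by
        show u.ofLp.2 i - w.ofLp.2 i = u.ofLp.2 i - m
        rw [hw2]
        simp
      rw [e1, e2] at h3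
      linarith
    have hz : (p.ofLp.2 i - m) ^ 2 ≤ 0 := by
      rcases le_total (-p.ofLp.1) (u.ofLp.2 i) with h | h
      · have hmv : m = -p.ofLp.1 := hm.trans (min_eq_left h)
        rw [hmv] at key ⊢
        nlinarith [hpK' i, key]
      · have hmv : m = u.ofLp.2 i := hm.trans (min_eq_right h)
        rw [hmv] at key ⊢
        nlinarith [key]
    have h0 : p.ofLp.2 i - m = 0 := sq_eq_zero_iff.mp (le_antisymm hz (sq_nonneg _))
    linarith [h0]
  refine ⟨part1, ?_⟩
  -- Part 2
  have key2 : ∀ d : Rone n, (∀ j, d.ofLp.2 j ≤ -d.ofLp.1) → ⟪u - p, d⟫ ≤ 0 := by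
    intro d hd
    by_contra hc
    push_neg at hc
    have hd0 : d ≠ 0 := by
      intro h0
      rw [h0, inner_zero_right] at hc
      exact lt_irrefl 0 hc
    have hdn : (0:ℝ) < ‖d‖ ^ 2 := pow_pos (norm_pos_iff.mpr hd0) 2
    set c := ⟪u - p, d⟫ with hcdef
    set t := c / ‖d‖ ^ 2 with ht
    have ht0 : 0 < t := div_pos hc hdn
    have hwK : p + t • d ∈ {z : Rone n | ∀ i, z.ofLp.2 i ≤ -z.ofLp.1} := by
      intro j
      show p.ofLp.2 j + t * d.ofLp.2 j ≤ -(p.ofLp.1 + t * d.ofLp.1)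
      have h1 := mul_le_mul_of_nonneg_left (hd j) ht0.le
      have h2 := hpK' j
      nlinarith
    have h2 : ‖u - p‖ ≤ ‖u - (p + t • d)‖ := hmin _ hwK
    have h3 : ‖u - p‖ ^ 2 ≤ ‖u - (p + t • d)‖ ^ 2 := pow_le_pow_left₀ (norm_nonneg _) h2 2
    rw [sub_add_eq_sub_sub, norm_sub_sq_real (u - p) (t • d), real_inner_smul_right, norm_smul,
      Real.norm_eq_abs] at h3
    have hc2 : t * ‖d‖ ^ 2 = c := div_mul_cancel₀ _ (ne_of_gt hdn)
    nlinarith [sq_abs t, mul_pos ht0 hc, h3, hc2]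
  set d1 : Rone n := (WithLp.equiv 2 _).symm (1,
    (WithLp.equiv 2 _).symm (fun _ => (-1:ℝ))) with hd1
  set d2 : Rone n := (WithLp.equiv 2 _).symm (-1,
    (WithLp.equiv 2 _).symm (fun _ => (1:ℝ))) with hd2
  have e1 := key2 d1 (fun j => le_rfl)
  have e2 := key2 d2 (fun j => by show (1:ℝ) ≤ -(-1); norm_num)
  rw [Rone.innerformula] at e1 e2
  have hv1 : (u - p).ofLp.1 = u.ofLp.1 - p.ofLp.1 := rfl
  have hv2 : ∀ j, (u - p).ofLp.2 j = u.ofLp.2 j - p.ofLp.2 j := fun _ => rfl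
  have hd11 : d1.ofLp.1 = 1 := rfl
  have hd12 : ∀ j, d1.ofLp.2 j = -1 := fun _ => rfl
  have hd21 : d2.ofLp.1 = -1 := rfl
  have hd22 : ∀ j, d2.ofLp.2 j = 1 := fun _ => rfl
  simp only [hv1, hv2, hd11, hd12, hd21, hd22, mul_one, mul_neg_one, mul_neg, mul_one] at e1 e2
  rw [Finset.sum_neg_distrib] at e1
  have hbal : u.ofLp.1 - p.ofLp.1 = ∑ j, (u.ofLp.2 j - p.ofLp.2 j) := by linarith
  have hsum : ∑ j, max (u.ofLp.2 j + p.ofLp.1) 0 = ∑ j, (u.ofLp.2 j - p.ofLp.2 j) := by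
    refine Finset.sum_congr rfl fun j _ => ?_
    rw [part1 j]
    rcases le_total (-p.ofLp.1) (u.ofLp.2 j) with h | h
    · rw [min_eq_left h, max_eq_left (by linarith)]
      ring
    · rw [min_eq_right h, max_eq_right (by linarith)]
      ring
  rw [hsum, ← hbal]
  ring
end
end

section
/- Let X ⊆ ℝⁿ be a nonempty convex compact set with κ = max_{x∈X} ‖x‖₂ > 0, let C = cone({κ} × X) ⊆ ℝ^{1+n} be the closed conic hull of {κ} × X, with polar cone C° and metric projection π_C. Let f_1, …, f_T ∈ ℝⁿ satisfy ‖f_t‖₂ ≤ L for all t. Let (x_t) ⊆ X and (u_t) ⊆ ℝ^{1+n} be the CBA⁺ iterates with uniform weights: x_1 ∈ X arbitrary; v_t = (⟨f_t, x_t⟩/κ, −f_t); u_1 = π_C(v_1); for t ≥ 1, x_{t+1} = (κ/ũ_t)·û_t if u_t = (ũ_t, û_t) ≠ 0 and x_{t+1} is an arbitrary point of X if u_t = 0; and u_{t+1} = π_C( (t·u_t + v_{t+1}) / (t+1) ). Then the linearly averaged regret satisfies ( Σ_{t=1}^T t·⟨f_t, x_t⟩ − min_{x∈X} Σ_{t=1}^T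 t·⟨f_t, x⟩ ) / (T(T+1)) ≤ 2κL/√T. -/
open scoped RealInnerProductSpace
open Finset

noncomputable section

/-- The conic hull `cone({κ} × X) = {α • (κ, x) : α ≥ 0, x ∈ X} ⊆ ℝ^{1+n}`. -/
def coneOf (n : ℕ) (κ : ℝ) (X : Set (EuclideanSpace ℝ (Fin n))) : Set (Rone n) :=
  {z | ∃ a : ℝ, 0 ≤ a ∧ ∃ x ∈ X, z = a • (WithLp.toLp 2 (κ, x) : Rone n)}

namespace CBAaux

lemma inner_eq {n : ℕ} (u w : Rone n) : ⟪u, w⟫ = u.ofLp.1 * w.ofLp.1 + ⟪u.ofLp.2, w.ofLp.2⟫ := by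
  rw [WithLp.prod_inner_apply]; norm_num [real_inner_comm]; ring

lemma norm_sq {n : ℕ} (u : Rone n) : ‖u‖ ^ 2 = u.ofLp.1 ^ 2 + ‖u.ofLp.2‖ ^ 2 := by
  rw [WithLp.prod_norm_sq_eq_of_L2, Real.norm_eq_abs, sq_abs]; rfl

variable {n : ℕ} {κ : ℝ} {X : Set (EuclideanSpace ℝ (Fin n))}

lemma smul_mem_coneOf {z : Rone n} (hz : z ∈ coneOf n κ X) {c : ℝ} (hc : 0 ≤ c) :
    c • z ∈ coneOf n κ X := by
  obtain ⟨a, ha, y, hy, rfl⟩ := hz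
  exact ⟨c * a, mul_nonneg hc ha, y, hy, smul_smul c a _⟩

lemma zero_mem_coneOf (hXne : X.Nonempty) : (0 : Rone n) ∈ coneOf n κ X := by
  obtain ⟨y, hy⟩ := hXne
  exact ⟨0, le_refl 0, y, hy, (zero_smul ℝ _).symm⟩

lemma add_mem_coneOf (hXconv : Convex ℝ X) {z w : Rone n}
    (hz : z ∈ coneOf n κ X) (hw : w ∈ coneOf n κ X) : z + w ∈ coneOf n κ X := by
  obtain ⟨a, ha, y, hy, rfl⟩ := hz
  obtain ⟨b, hb, y', hy', rfl⟩ := hw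
  rcases eq_or_lt_of_le (add_nonneg ha hb) with h0 | hpos
  · have ha0 : a = 0 := by linarith
    have hb0 : b = 0 := by linarith
    refine ⟨0, le_refl 0, y, hy, ?_⟩
    simp [ha0, hb0]
  · refine ⟨a + b, le_of_lt hpos, (a / (a + b)) • y + (b / (a + b)) • y', ?_, ?_⟩
    · exact hXconv hy hy' (div_nonneg ha (le_of_lt hpos)) (div_nonneg hb (le_of_lt hpos))
        (by field_simp)
    · have hne : a + b ≠ 0 := ne_of_gt hpos
      have h2 : (a + b) • (((a / (a + b)) • y + (b / (a + b)) • y') : EuclideanSpace ℝ (Fin n))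
          = a • y + b • y' := by
        rw [smul_add, smul_smul, smul_smul]
        congr 1 <;> congr 1 <;> field_simp
      refine WithLp.ofLp_injective 2 (Prod.ext ?_ ?_)
      · show a * κ + b * κ = (a + b) * κ; ring
      · show a • y + b • y' = (a + b) • ((a / (a + b)) • y + (b / (a + b)) • y')
        exact h2.symm
      
lemma coneOf_convex (hXconv : Convex ℝ X) (hXne : X.Nonempty) :
    Convex ℝ (coneOf n κ X) := by
  intro z hz w hw a b ha hb _
  exact add_mem_coneOf hXconv (smul_mem_coneOf hz ha) (smul_mem_coneOf hw hb)

lemma IsProjOn.variational {H : Type*} [NormedAddCommGroup H] [InnerProductSpace ℝ H]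
    {C : Set H} (hC : Convex ℝ C) {z p : H} (h : IsProjOn C z p) :
    ∀ w ∈ C, ⟪z - p, w - p⟫ ≤ 0 := by
  haveI : Nonempty ↥C := ⟨⟨p, h.1⟩⟩
  have heq : ‖z - p‖ = ⨅ w : C, ‖z - w‖ := by
    refine le_antisymm (le_ciInf fun w => h.2 w w.2) ?_
    have hbdd : BddBelow (Set.range fun w : C => ‖z - (w : H)‖) := by
      refine ⟨0, ?_⟩
      rintro r ⟨w, rfl⟩
      exact norm_nonneg _
    exact ciInf_le hbdd ⟨p, h.1⟩
  exact (norm_eq_iInf_iff_real_inner_le_zero hC h.1).1 heq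

lemma IsProjOn.smul {H : Type*} [NormedAddCommGroup H] [InnerProductSpace ℝ H]
    {C : Set H} (hCs : ∀ z ∈ C, ∀ c : ℝ, 0 ≤ c → c • z ∈ C) {z p : H}
    (h : IsProjOn C z p) {c : ℝ} (hc : 0 < c) : IsProjOn C (c • z) (c • p) := by
  refine ⟨hCs p h.1 c (le_of_lt hc), fun w hw => ?_⟩
  have hw' : c⁻¹ • w ∈ C := hCs w hw c⁻¹ (by positivity)
  have := h.2 _ hw'
  have hkey : ‖c • z - c • p‖ = c * ‖z - p‖ := by
    rw [← smul_sub, norm_smul, Real.norm_eq_abs, abs_of_pos hc]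
  have hkey2 : ‖c • z - w‖ = c * ‖z - c⁻¹ • w‖ := by
    rw [← norm_smul_of_nonneg (le_of_lt hc), smul_sub, smul_smul,
      mul_inv_cancel₀ (ne_of_gt hc), one_smul]
  rw [hkey, hkey2]
  exact mul_le_mul_of_nonneg_left this (le_of_lt hc)

end CBAaux

open CBAaux

set_option maxHeartbeats 1000000 in
/-- Theorem 2 of the paper: CBA⁺ with uniform weights on the payoffs is
compatible with linear averaging on the decisions and achieves average regret `≤ 2κL/√T`.
Sequences are indexed from `0`, so index `t ∈ {0, …, T−1}` corresponds to round `t+1`;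
the recursion `u_{t+1} = π_C((t·u_t + v_{t+1})/(t+1))` (1-based) becomes
`u (t+1) = π_C(((t+1)·u t + v (t+1))/(t+2))` (0-based). -/
theorem cbaPlus_uniform_weights_linear_averaging_regret (n T : ℕ) (hT : 1 ≤ T)
    (X : Set (EuclideanSpace ℝ (Fin n)))
    (hXne : X.Nonempty) (hXconv : Convex ℝ X) (hXcomp : IsCompact X)
    (κ L : ℝ) (hκ : IsGreatest ((fun x => ‖x‖) '' X) κ) (hκpos : 0 < κ)
    (f x : ℕ → EuclideanSpace ℝ (Fin n))
    (hL : ∀ t < T, ‖f t‖ ≤ L)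
    (hxmem : ∀ t < T, x t ∈ X)
    (v u : ℕ → Rone n)
    (hv : ∀ t < T, v t = (WithLp.toLp 2 (⟪f t, x t⟫ / κ, -f t) : Rone n))
    (hu0 : IsProjOn (coneOf n κ X) (v 0) (u 0))
    (hurec : ∀ t : ℕ, t + 1 < T →
      IsProjOn (coneOf n κ X)
        ((((t : ℝ) + 2)⁻¹) • (((t : ℝ) + 1) • u t + v (t + 1))) (u (t + 1)))
    (hxplay : ∀ t : ℕ, t + 1 < T → u t ≠ 0 →
      x (t + 1) = (κ / (u t).ofLp.1) • (u t).ofLp.2) :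
    ((∑ t ∈ Finset.range T, ((t : ℝ) + 1) * ⟪f t, x t⟫)
        - sInf ((fun z => ∑ t ∈ Finset.range T, ((t : ℝ) + 1) * ⟪f t, z⟫) '' X))
      / ((T : ℝ) * ((T : ℝ) + 1))
      ≤ 2 * κ * L / Real.sqrt T := by
  set C := coneOf n κ X with hCdef
  have hCconv : Convex ℝ C := coneOf_convex hXconv hXne
  have hCs : ∀ z ∈ C, ∀ c : ℝ, 0 ≤ c → c • z ∈ C := fun z hz c hc => smul_mem_coneOf hz hc
  have hC0 : (0 : Rone n) ∈ C := zero_mem_coneOf hXne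
  have hXnorm : ∀ y ∈ X, ‖y‖ ≤ κ := fun y hy => hκ.2 ⟨y, hy, rfl⟩
  have hL0 : 0 ≤ L := le_trans (norm_nonneg _) (hL 0 hT)
  -- basic projection consequences
  have hvar : ∀ z p : Rone n, IsProjOn C z p → ∀ w ∈ C, ⟪z - p, w⟫ ≤ 0 := by
    intro z p h w hw
    have := CBAaux.IsProjOn.variational hCconv h (w + p) (add_mem_coneOf hXconv hw h.1)
    simpa using this
  have horthp : ∀ z p : Rone n, IsProjOn C z p → ⟪z - p, p⟫ = 0 := by
    intro z p h
    have h1 := CBAaux.IsProjOn.variational hCconv h 0 hC0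
    have h2 := hvar z p h p h.1
    simp only [zero_sub, inner_neg_right] at h1
    linarith
  have hprojnorm : ∀ z p : Rone n, IsProjOn C z p → ‖p‖ ^ 2 ≤ ‖z‖ ^ 2 := by
    intro z p h
    have h0 := horthp z p h
    have : ‖z‖ ^ 2 = ‖p‖ ^ 2 + ‖z - p‖ ^ 2 + 2 * ⟪z - p, p⟫ := by
      have hzz : z = p + (z - p) := by abel
      rw [hzz, norm_add_sq_real]
      rw [real_inner_comm]
      ring_nf
      abel
    rw [h0] at this
    nlinarith [sq_nonneg ‖z - p‖]
  -- the unnormalized aggregates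
  set U : ℕ → Rone n := fun t => ((t : ℝ) + 1) • u t with hUdef
  have hU0 : IsProjOn C (v 0) (U 0) := by
    have : U 0 = u 0 := by simp [hUdef]
    rw [this]; exact hu0
  have hUrec : ∀ t : ℕ, t + 1 < T → IsProjOn C (U t + v (t + 1)) (U (t + 1)) := by
    intro t ht
    have h2 : (0 : ℝ) < (t : ℝ) + 2 := by positivity
    have := CBAaux.IsProjOn.smul hCs (hurec t ht) h2
    have e1 : ((t : ℝ) + 2) • (((t : ℝ) + 2)⁻¹ • (((t : ℝ) + 1) • u t + v (t + 1)))
        = U t + v (t + 1) := by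
      rw [smul_smul, mul_inv_cancel₀ (ne_of_gt h2), one_smul]
    have e2 : ((t : ℝ) + 2) • u (t + 1) = U (t + 1) := by
      show _ = (((t + 1 : ℕ) : ℝ) + 1) • u (t + 1)
      push_cast
      congr 1
      ring
    rw [e1, e2] at this
    exact this
  have humem : ∀ t, t < T → u t ∈ C := by
    intro t ht
    cases t with
    | zero => exact hu0.1
    | succ s => exact (hurec s ht).1
  have hUmem : ∀ t, t < T → U t ∈ C := by
    intro t ht
    exact hCs (u t) (humem t ht) _ (by positivity)
  -- orthogonality of the play
  have horthv : ∀ t : ℕ, t + 1 < T → ⟪u t, v (t + 1)⟫ = 0 := by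
    intro t ht
    by_cases hut : u t = 0
    · rw [hut]; exact inner_zero_left _
    · have hmem := humem t (Nat.lt_of_succ_lt ht : t < T)
      obtain ⟨a, ha, y, hy, huty⟩ := hmem
      have hapos : 0 < a := by
        rcases eq_or_lt_of_le ha with h0 | h0
        · exfalso; apply hut; rw [huty, ← h0, zero_smul]
        · exact h0
      have hfst : (u t).ofLp.1 = a * κ := by rw [huty]; rfl
      have hsnd : (u t).ofLp.2 = a • y := by rw [huty]; rfl
      have hfstpos : (0 : ℝ) < (u t).ofLp.1 := by rw [hfst]; positivity
      have hxp := hxplay t ht hut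
      have hvt := hv (t + 1) ht
      have hv1 : (v (t + 1)).ofLp.1 = ⟪f (t + 1), x (t + 1)⟫ / κ := by rw [hvt]
      have hv2 : (v (t + 1)).ofLp.2 = -f (t + 1) := by rw [hvt]
      rw [inner_eq, hv1, hv2, hxp, real_inner_smul_right]
      rw [inner_neg_right]
      have : ⟪(u t).ofLp.2, f (t + 1)⟫ = ⟪f (t + 1), (u t).ofLp.2⟫ := real_inner_comm _ _
      rw [this]
      field_simp
      ring
  -- norm bound on payoffs
  have hvnorm : ∀ t, t < T → ‖v t‖ ^ 2 ≤ 2 * L ^ 2 := by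
    intro t ht
    rw [hv t ht, norm_sq]
    have h1 : |⟪f t, x t⟫| ≤ L * κ := by
      calc |⟪f t, x t⟫| ≤ ‖f t‖ * ‖x t‖ := abs_real_inner_le_norm _ _
        _ ≤ L * κ := mul_le_mul (hL t ht) (hXnorm _ (hxmem t ht)) (norm_nonneg _) hL0
    have h2 : (⟪f t, x t⟫ / κ) ^ 2 ≤ L ^ 2 := by
      rw [div_pow, div_le_iff₀ (by positivity : (0:ℝ) < κ ^ 2)]
      calc ⟪f t, x t⟫ ^ 2 = |⟪f t, x t⟫| ^ 2 := (sq_abs _).symm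
        _ ≤ (L * κ) ^ 2 := by nlinarith [abs_nonneg ⟪f t, x t⟫]
        _ = L ^ 2 * κ ^ 2 := by ring
    have h3 : ‖(-f t : EuclideanSpace ℝ (Fin n))‖ ^ 2 ≤ L ^ 2 := by
      rw [norm_neg]
      nlinarith [hL t ht, norm_nonneg (f t)]
    have e1 : ((WithLp.toLp 2 (⟪f t, x t⟫ / κ, -f t) : Rone n)).ofLp.1 = ⟪f t, x t⟫ / κ := rfl
    have e2 : ((WithLp.toLp 2 (⟪f t, x t⟫ / κ, -f t) : Rone n)).ofLp.2 = -f t := rfl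
    rw [e1, e2]
    linarith
  -- norm bound on aggregates
  have hUnorm : ∀ t, t < T → ‖U t‖ ^ 2 ≤ 2 * L ^ 2 * ((t : ℝ) + 1) := by
    intro t
    induction t with
    | zero =>
      intro ht
      have := hprojnorm _ _ hU0
      have := hvnorm 0 ht
      push_cast
      linarith
    | succ s ih =>
      intro ht
      have hs : s < T := Nat.lt_of_succ_lt ht
      have ihs := ih hs
      have h1 := hprojnorm _ _ (hUrec s ht)
      have h2 : ‖U s + v (s + 1)‖ ^ 2
          = ‖U s‖ ^ 2 + 2 * ⟪U s, v (s + 1)⟫ + ‖v (s + 1)‖ ^ 2 := by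
        rw [norm_add_sq_real]
      have h3 : ⟪U s, v (s + 1)⟫ = 0 := by
        have hUs : U s = ((s : ℝ) + 1) • u s := rfl
        rw [hUs, real_inner_smul_left, horthv s ht, mul_zero]
      have h4 := hvnorm (s + 1) ht
      rw [h3] at h2
      push_cast
      push_cast at ihs
      nlinarith
  -- fix a comparator
  have key : ∀ xs ∈ X,
      (∑ t ∈ Finset.range T, ((t : ℝ) + 1) * ⟪f t, x t⟫)
        - (∑ t ∈ Finset.range T, ((t : ℝ) + 1) * ⟪f t, xs⟫)
        ≤ (T : ℝ) * (2 * κ * L * Real.sqrt T) := by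
    intro xs hxs
    set g : Rone n := (WithLp.toLp 2 (κ, xs) : Rone n) with hgdef
    have hg1 : g.ofLp.1 = κ := rfl
    have hg2 : g.ofLp.2 = xs := rfl
    have hgC : g ∈ C := ⟨1, zero_le_one, xs, hxs, (one_smul ℝ _).symm⟩
    have hgnn : ∀ w ∈ C, 0 ≤ ⟪g, w⟫ := by
      intro w hw
      obtain ⟨a, ha, y, hy, rfl⟩ := hw
      have h1 : ⟪g, a • (WithLp.toLp 2 (κ, y) : Rone n)⟫ = a * (κ * κ + ⟪xs, y⟫) := by
        rw [real_inner_smul_right, inner_eq]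
      rw [h1]
      have hb1 := abs_real_inner_le_norm xs y
      have hb2 := hXnorm xs hxs
      have hb3 := hXnorm y hy
      have hlo : -(‖xs‖ * ‖y‖) ≤ ⟪xs, y⟫ := (abs_le.1 hb1).1
      have hxy : ‖xs‖ * ‖y‖ ≤ κ * κ :=
        mul_le_mul hb2 hb3 (norm_nonneg y) (le_of_lt hκpos)
      have hp : 0 ≤ κ * κ + ⟪xs, y⟫ := by linarith
      exact mul_nonneg ha hp
    -- per-step inequality and Abel summation by induction
    have hstep0 : ⟪g, v 0⟫ ≤ ⟪g, U 0⟫ := by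
      have h := hvar _ _ hU0 g hgC
      rw [real_inner_comm, inner_sub_right] at h
      linarith
    have hstep : ∀ t : ℕ, t + 1 < T → ⟪g, v (t + 1)⟫ ≤ ⟪g, U (t + 1)⟫ - ⟪g, U t⟫ := by
      intro t ht
      have h := hvar _ _ (hUrec t ht) g hgC
      rw [real_inner_comm, inner_sub_right, inner_add_right] at h
      linarith
    have habel : ∀ t, t < T →
        ∑ s ∈ Finset.range (t + 1), ((s : ℝ) + 1) * ⟪g, v s⟫
          ≤ ((t : ℝ) + 1) * ⟪g, U t⟫ := by
      intro t
      induction t with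
      | zero =>
        intro ht
        simp only [Finset.sum_range_one, Nat.cast_zero, zero_add, one_mul]
        linarith [hstep0]
      | succ s ih =>
        intro ht
        have hs : s < T := Nat.lt_of_succ_lt ht
        have ihs := ih hs
        rw [Finset.sum_range_succ]
        have h1 := hstep s ht
        have h2 := hgnn (U s) (hUmem s hs)
        push_cast
        push_cast at ihs
        nlinarith
    -- instantiate at t = T - 1
    have hT1 : T - 1 < T := Nat.sub_lt (lt_of_lt_of_le one_pos hT) one_pos
    have hcast : ((T - 1 : ℕ) : ℝ) + 1 = (T : ℝ) := by
      have : (T - 1) + 1 = T := Nat.succ_pred_eq_of_pos (lt_of_lt_of_le one_pos hT)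
      calc ((T - 1 : ℕ) : ℝ) + 1 = (((T - 1) + 1 : ℕ) : ℝ) := by push_cast; ring
        _ = (T : ℝ) := by rw [this]
    have hmain := habel (T - 1) hT1
    rw [Nat.sub_add_cancel hT, hcast] at hmain
    -- bound the RHS
    have hgU : ⟪g, U (T - 1)⟫ ≤ 2 * κ * L * Real.sqrt T := by
      have hnn := hgnn (U (T - 1)) (hUmem (T - 1) hT1)
      have hgn : ‖g‖ ^ 2 ≤ 2 * κ ^ 2 := by
        rw [norm_sq, hg1, hg2]
        have := hXnorm xs hxs
        nlinarith [norm_nonneg xs]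
      have hUn : ‖U (T - 1)‖ ^ 2 ≤ 2 * L ^ 2 * (T : ℝ) := by
        have := hUnorm (T - 1) hT1
        rw [hcast] at this
        exact this
      have hcs : ⟪g, U (T - 1)⟫ ≤ ‖g‖ * ‖U (T - 1)‖ := real_inner_le_norm _ _
      have hsq : ⟪g, U (T - 1)⟫ ^ 2 ≤ (2 * κ * L * Real.sqrt T) ^ 2 := by
        have h5 : ⟪g, U (T - 1)⟫ ^ 2 ≤ ‖g‖ ^ 2 * ‖U (T - 1)‖ ^ 2 := by
          nlinarith [norm_nonneg g, norm_nonneg (U (T - 1)), hcs, hnn]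
        have h6 : ‖g‖ ^ 2 * ‖U (T - 1)‖ ^ 2 ≤ 2 * κ ^ 2 * ‖U (T - 1)‖ ^ 2 :=
          mul_le_mul_of_nonneg_right hgn (sq_nonneg _)
        have h7 : 2 * κ ^ 2 * ‖U (T - 1)‖ ^ 2 ≤ 2 * κ ^ 2 * (2 * L ^ 2 * (T : ℝ)) :=
          mul_le_mul_of_nonneg_left hUn (by positivity)
        have hBsq : (2 * κ * L * Real.sqrt T) ^ 2 = 2 * κ ^ 2 * (2 * L ^ 2 * (T : ℝ)) := by
          rw [mul_pow, Real.sq_sqrt (by positivity : (0:ℝ) ≤ (T:ℝ))]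
          ring
        rw [hBsq]
        linarith
      have hBnn : 0 ≤ 2 * κ * L * Real.sqrt T := by positivity
      calc ⟪g, U (T - 1)⟫ = Real.sqrt (⟪g, U (T - 1)⟫ ^ 2) := (Real.sqrt_sq hnn).symm
        _ ≤ Real.sqrt ((2 * κ * L * Real.sqrt T) ^ 2) := Real.sqrt_le_sqrt hsq
        _ = 2 * κ * L * Real.sqrt T := Real.sqrt_sq hBnn
    -- relate ⟪g, v s⟫ to the regret terms
    have hgv : ∀ s, s < T → ⟪g, v s⟫ = ⟪f s, x s⟫ - ⟪f s, xs⟫ := by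
      intro s hs
      have h1 : ⟪g, v s⟫ = κ * (⟪f s, x s⟫ / κ) + ⟪xs, -f s⟫ := by
        rw [hv s hs, inner_eq]
      have hc : κ * (⟪f s, x s⟫ / κ) = ⟪f s, x s⟫ := by
        rw [mul_comm, div_mul_cancel₀ _ (ne_of_gt hκpos)]
      rw [h1, inner_neg_right, real_inner_comm xs (f s), hc]
      ring
    have hsumeq : ∑ s ∈ Finset.range T, ((s : ℝ) + 1) * ⟪g, v s⟫
        = (∑ t ∈ Finset.range T, ((t : ℝ) + 1) * ⟪f t, x t⟫)
          - (∑ t ∈ Finset.range T, ((t : ℝ) + 1) * ⟪f t, xs⟫) := by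
      rw [← Finset.sum_sub_distrib]
      refine Finset.sum_congr rfl fun s hs => ?_
      rw [hgv s (Finset.mem_range.1 hs)]
      ring
    rw [hsumeq] at hmain
    have hTnn : (0:ℝ) ≤ (T:ℝ) := Nat.cast_nonneg T
    calc (∑ t ∈ Finset.range T, ((t : ℝ) + 1) * ⟪f t, x t⟫)
          - (∑ t ∈ Finset.range T, ((t : ℝ) + 1) * ⟪f t, xs⟫)
        ≤ (T : ℝ) * ⟪g, U (T - 1)⟫ := hmain
      _ ≤ (T : ℝ) * (2 * κ * L * Real.sqrt T) := by
          exact mul_le_mul_of_nonneg_left hgU hTnn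
  -- pass to the infimum
  set S := ∑ t ∈ Finset.range T, ((t : ℝ) + 1) * ⟪f t, x t⟫ with hSdef
  set R := (T : ℝ) * (2 * κ * L * Real.sqrt T) with hRdef
  have hinf : S - R ≤ sInf ((fun z => ∑ t ∈ Finset.range T, ((t : ℝ) + 1) * ⟪f t, z⟫) '' X) := by
    apply le_csInf
    · exact hXne.image _
    · rintro r ⟨xs, hxs, rfl⟩
      have := key xs hxs
      simp only
      linarith
  have hTpos : (0:ℝ) < (T:ℝ) := by exact_mod_cast lt_of_lt_of_le one_pos hT
  have hdenpos : (0:ℝ) < (T:ℝ) * ((T:ℝ) + 1) := by positivity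
  have hfrac : R / ((T:ℝ) * ((T:ℝ) + 1)) ≤ 2 * κ * L / Real.sqrt T := by
    rw [div_le_div_iff₀ hdenpos (Real.sqrt_pos.2 hTpos)]
    have hsq : Real.sqrt (T:ℝ) * Real.sqrt (T:ℝ) = (T:ℝ) :=
      Real.mul_self_sqrt (le_of_lt hTpos)
    have hklnn : 0 ≤ 2 * κ * L := by positivity
    calc R * Real.sqrt (T:ℝ) = (2 * κ * L) * ((T:ℝ) * (Real.sqrt T * Real.sqrt T)) := by
          rw [hRdef]; ring
      _ = (2 * κ * L) * ((T:ℝ) * (T:ℝ)) := by rw [hsq]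
      _ ≤ (2 * κ * L) * ((T:ℝ) * ((T:ℝ) + 1)) := by nlinarith
      _ = 2 * κ * L * ((T:ℝ) * ((T:ℝ) + 1)) := by ring
  calc (S - sInf ((fun z => ∑ t ∈ Finset.range T, ((t : ℝ) + 1) * ⟪f t, z⟫) '' X))
        / ((T:ℝ) * ((T:ℝ) + 1))
      ≤ R / ((T:ℝ) * ((T:ℝ) + 1)) := by
        exact (div_le_div_iff_of_pos_right hdenpos).2 (by linarith)
      _ ≤ 2 * κ * L / Real.sqrt T := hfrac
end
end

section
/- Let X ⊆ ℝⁿ be a nonempty convex compact set with κ = max_{x∈X} ‖x‖₂ > 0, let C = cone({κ} × X) ⊆ ℝ^{1+n} with polar cone C° and metric projections π_C, π_{C°}. Let ω_1, …, ω_T > 0 be positive weights with partial sums S_t = Σ_{τ=1}^t ω_τ, and let f_1, …, f_T ∈ ℝⁿ satisfy ‖f_t‖₂ ≤ L. Define the CBA iterates: x_1 ∈ X arbitrary; v_t = (⟨f_t, x_t⟩/κ, −f_t); u_t = (1/S_t) Σ_{τ=1}^t ω_τ v_τ; and for t ≥ 1, writing π_C(u_t) = (p̃_t, p̂_t), x_{t+1}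 = (κ/p̃_t)·p̂_t if π_C(u_t) ≠ 0 and x_{t+1} is an arbitrary point of X if π_C(u_t) = 0. Then the weighted regret satisfies Σ_{t=1}^T ω_t ⟨f_t, x_t⟩ − min_{x∈X} Σ_{t=1}^T ω_t ⟨f_t, x⟩ ≤ 4κL·√(Σ_{t=1}^T ω_t²). -/
open scoped RealInnerProductSpace
open Finset

noncomputable section

section Aux
variable {H : Type*} [NormedAddCommGroup H] [InnerProductSpace ℝ H]

lemma isProjOn_var_ineq {C : Set H} (hC : Convex ℝ C) {u pu : H}
    (h : IsProjOn C u pu) {w : H} (hw : w ∈ C) : ⟪u - pu, w - pu⟫ ≤ 0 := by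
  have hne : Nonempty C := ⟨⟨pu, h.1⟩⟩
  have heq : ‖u - pu‖ = ⨅ w : C, ‖u - w‖ := by
    apply le_antisymm
    · exact le_ciInf fun w => h.2 w w.2
    · have hbdd : BddBelow (Set.range fun w : C => ‖u - w‖) := by
        refine ⟨0, ?_⟩
        rintro y ⟨w, rfl⟩
        exact norm_nonneg _
      exact ciInf_le hbdd ⟨pu, h.1⟩
  exact (norm_eq_iInf_iff_real_inner_le_zero hC h.1).1 heq w hw

lemma proj_sq_bound {z pz q : H} (h1 : ⟪z - pz, pz⟫ = 0) (h2 : ⟪pz, q⟫ ≤ 0) :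
    ‖pz‖ ^ 2 ≤ ‖z - q‖ ^ 2 := by
  have hd : z - q = pz + (z - pz - q) := by abel
  have hexp : ‖z - q‖ ^ 2 = ‖pz‖ ^ 2 + 2 * ⟪pz, z - pz - q⟫ + ‖z - pz - q‖ ^ 2 := by
    rw [hd, norm_add_sq_real]
  have h3 : ⟪pz, z - pz - q⟫ = ⟪z - pz, pz⟫ - ⟪pz, q⟫ := by
    rw [inner_sub_right, real_inner_comm pz (z - pz)]
  nlinarith [sq_nonneg ‖z - pz - q‖]

end Aux

lemma Rone.inner_eq {n : ℕ} (z w : Rone n) : ⟪z, w⟫ = z.ofLp.1 * w.ofLp.1 + ⟪z.ofLp.2, w.ofLp.2⟫ := by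
  rw [WithLp.prod_inner_apply]; simp only [RCLike.inner_apply, conj_trivial]; ring

lemma Rone.norm_sq {n : ℕ} (z : Rone n) : ‖z‖ ^ 2 = z.ofLp.1 ^ 2 + ‖z.ofLp.2‖ ^ 2 := by
  rw [← real_inner_self_eq_norm_sq, Rone.inner_eq, ← real_inner_self_eq_norm_sq]
  ring

/-- Theorem A.2 of the paper: CBA with weighted averaging on both decisions
and payoffs: the `ω`-weighted regret is at most `4κL·√(Σ_t ω_t²)`.  Sequences are indexed
from `0`, so index `t ∈ {0, …, T−1}` is round `t+1`; `u t` is the `ω`-weighted average of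
the payoffs `v 0, …, v t` (no projection), and the decision `x (t+1)` is obtained by
rescaling `π_C(u t) = p t` to first coordinate `κ`. -/
theorem cba_weighted_regret (n T : ℕ) (hT : 1 ≤ T)
    (X : Set (EuclideanSpace ℝ (Fin n)))
    (hXne : X.Nonempty) (hXconv : Convex ℝ X) (hXcomp : IsCompact X)
    (κ L : ℝ) (hκ : IsGreatest ((fun x => ‖x‖) '' X) κ) (hκpos : 0 < κ)
    (ω : ℕ → ℝ) (hω : ∀ t < T, 0 < ω t)
    (f x : ℕ → EuclideanSpace ℝ (Fin n))
    (hL : ∀ t < T, ‖f t‖ ≤ L)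
    (hxmem : ∀ t < T, x t ∈ X)
    (v u p : ℕ → Rone n)
    (hv : ∀ t < T, v t = (WithLp.toLp 2 (⟪f t, x t⟫ / κ, -f t) : Rone n))
    (hu : ∀ t < T, u t = (∑ j ∈ Finset.range (t + 1), ω j)⁻¹ •
      ∑ j ∈ Finset.range (t + 1), ω j • v j)
    (hp : ∀ t < T, IsProjOn (coneOf n κ X) (u t) (p t))
    (hxplay : ∀ t : ℕ, t + 1 < T → p t ≠ 0 →
      x (t + 1) = (κ / (p t).ofLp.1) • (p t).ofLp.2) :
    (∑ t ∈ Finset.range T, ω t * ⟪f t, x t⟫)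
        - sInf ((fun z => ∑ t ∈ Finset.range T, ω t * ⟪f t, z⟫) '' X)
      ≤ 4 * κ * L * Real.sqrt (∑ t ∈ Finset.range T, ω t ^ 2) := by
  obtain ⟨x0, hx0⟩ := hXne
  -- cone facts
  have hCmem : ∀ (a : ℝ), 0 ≤ a → ∀ y ∈ X, a • (WithLp.toLp 2 (κ, y) : Rone n) ∈ coneOf n κ X :=
    fun a ha y hy => ⟨a, ha, y, hy, rfl⟩
  have hC0 : (0 : Rone n) ∈ coneOf n κ X := by
    simpa using hCmem 0 le_rfl x0 hx0
  have hCsmul : ∀ (c : ℝ), 0 ≤ c → ∀ z ∈ coneOf n κ X, c • z ∈ coneOf n κ X := by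
    rintro c hc z ⟨a, ha, y, hy, rfl⟩
    rw [smul_smul]; exact hCmem _ (mul_nonneg hc ha) y hy
  have hCadd : ∀ z ∈ coneOf n κ X, ∀ w ∈ coneOf n κ X, z + w ∈ coneOf n κ X := by
    rintro _ ⟨a, ha, y, hy, rfl⟩ _ ⟨b, hb, y', hy', rfl⟩
    rcases eq_or_lt_of_le (add_nonneg ha hb) with hab | hab
    · have ha0 : a = 0 := by linarith
      have hb0 : b = 0 := by linarith
      simpa [ha0, hb0] using hC0
    · have hmem : ((a / (a + b)) • y + (b / (a + b)) • y' : EuclideanSpace ℝ (Fin n)) ∈ X :=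
        hXconv hy hy' (div_nonneg ha hab.le) (div_nonneg hb hab.le)
          (by field_simp)
      have heq : a • (WithLp.toLp 2 (κ, y) : Rone n) + b • (WithLp.toLp 2 (κ, y') : Rone n)
          = (a + b) • (WithLp.toLp 2 (κ, (a / (a + b)) • y + (b / (a + b)) • y') : Rone n) := by
        apply WithLp.ofLp_injective
        apply Prod.ext
        · show a * κ + b * κ = (a + b) * κ; ring
        · show a • y + b • y' = (a + b) • ((a / (a + b)) • y + (b / (a + b)) • y')
          rw [smul_add, smul_smul, smul_smul]
          rw [mul_div_cancel₀ _ hab.ne', mul_div_cancel₀ _ hab.ne']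
      rw [heq]; exact hCmem _ hab.le _ hmem
  have hCconv : Convex ℝ (coneOf n κ X) := by
    intro z hz w hw a b ha hb hab
    exact hCadd _ (hCsmul a ha z hz) _ (hCsmul b hb w hw)
  -- projection facts
  have hpC : ∀ t < T, p t ∈ coneOf n κ X := fun t ht => (hp t ht).1
  have hvar : ∀ t < T, ∀ w ∈ coneOf n κ X, ⟪u t - p t, w - p t⟫ ≤ 0 :=
    fun t ht w hw => isProjOn_var_ineq hCconv (hp t ht) hw
  have hpolar : ∀ t < T, ∀ c ∈ coneOf n κ X, ⟪u t - p t, c⟫ ≤ 0 := by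
    intro t ht c hc
    have := hvar t ht (p t + c) (hCadd _ (hpC t ht) _ hc)
    simpa using this
  have horth : ∀ t < T, ⟪u t - p t, p t⟫ = 0 := by
    intro t ht
    have h1 : ⟪u t - p t, p t⟫ ≤ 0 := hpolar t ht _ (hpC t ht)
    have h2 := hvar t ht 0 hC0
    simp only [zero_sub, inner_neg_right] at h2
    linarith
  have hSpos : ∀ t < T, 0 < ∑ j ∈ Finset.range (t + 1), ω j := by
    intro t ht
    apply Finset.sum_pos _ (by simp)
    intro j hj
    exact hω j (lt_of_lt_of_le (Finset.mem_range.1 hj) ht)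
  have hWu : ∀ t < T, (∑ j ∈ Finset.range (t + 1), ω j) • u t
      = ∑ j ∈ Finset.range (t + 1), ω j • v j := by
    intro t ht
    rw [hu t ht, smul_smul, mul_inv_cancel₀ (hSpos t ht).ne', one_smul]
  -- Blackwell cross term
  have hcross : ∀ t, t + 1 < T → ⟪p t, v (t + 1)⟫ = 0 := by
    intro t ht
    by_cases hp0 : p t = 0
    · simp [hp0]
    · obtain ⟨a, ha, y, hy, hpe⟩ := hpC t (by omega)
      have ha0 : a ≠ 0 := by rintro rfl; simp at hpe; exact hp0 hpe
      have hp1 : (p t).ofLp.1 = a * κ := by rw [hpe]; rfl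
      have hp1ne : (p t).ofLp.1 ≠ 0 := by
        rw [hp1]; exact mul_ne_zero ha0 hκpos.ne'
      have hx1 := hxplay t ht hp0
      rw [hv (t + 1) ht, Rone.inner_eq]
      show (p t).ofLp.1 * (⟪f (t + 1), x (t + 1)⟫ / κ) + ⟪(p t).ofLp.2, -f (t + 1)⟫ = 0
      rw [hx1, inner_neg_right, real_inner_smul_right,
        real_inner_comm ((p t).ofLp.2) (f (t + 1))]
      field_simp
      ring
  have hL0 : 0 ≤ L := le_trans (norm_nonneg _) (hL 0 hT)
  have hvbd : ∀ t < T, ‖v t‖ ^ 2 ≤ 2 * L ^ 2 := by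
    intro t ht
    have hxκ : ‖x t‖ ≤ κ := hκ.2 ⟨x t, hxmem t ht, rfl⟩
    have hfx : |⟪f t, x t⟫| ≤ L * κ :=
      le_trans (abs_real_inner_le_norm _ _)
        (mul_le_mul (hL t ht) hxκ (norm_nonneg _) hL0)
    have hvn : ‖v t‖ ^ 2 = (⟪f t, x t⟫ / κ) ^ 2 + ‖f t‖ ^ 2 := by
      rw [hv t ht, Rone.norm_sq]
      simp
    rw [hvn]
    have h2 : (⟪f t, x t⟫ / κ) ^ 2 ≤ L ^ 2 := by
      rw [div_pow, div_le_iff₀ (by positivity)]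
      nlinarith [abs_nonneg ⟪f t, x t⟫, sq_abs ⟪f t, x t⟫]
    nlinarith [hL t ht, norm_nonneg (f t)]
  -- main induction
  have hmain : ∀ t, t < T →
      ‖(∑ j ∈ Finset.range (t + 1), ω j) • p t‖ ^ 2
        ≤ ∑ j ∈ Finset.range (t + 1), ω j ^ 2 * ‖v j‖ ^ 2 := by
    have hkey : ∀ t < T, ∀ q : Rone n,
        ⟪(∑ j ∈ Finset.range (t + 1), ω j) • p t, q⟫ ≤ 0 →
        ‖(∑ j ∈ Finset.range (t + 1), ω j) • p t‖ ^ 2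
          ≤ ‖(∑ j ∈ Finset.range (t + 1), ω j) • u t - q‖ ^ 2 := by
      intro t ht q hq
      apply proj_sq_bound _ hq
      rw [← smul_sub, real_inner_smul_left, real_inner_smul_right, horth t ht]
      ring
    intro t
    induction t with
    | zero =>
      intro ht
      have h := hkey 0 ht 0 (by simp)
      rw [sub_zero, hWu 0 ht] at h
      refine h.trans ?_
      simp only [Nat.zero_add, Finset.sum_range_one]
      rw [norm_smul, mul_pow, Real.norm_eq_abs, sq_abs]
    | succ t ih =>
      intro ht
      have ht' : t < T := by omega
      have hq : ⟪(∑ j ∈ Finset.range (t + 2), ω j) • p (t + 1),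
          (∑ j ∈ Finset.range (t + 1), ω j) • (u t - p t)⟫ ≤ 0 := by
        rw [real_inner_smul_left, real_inner_smul_right]
        have h1 : ⟪u t - p t, p (t + 1)⟫ ≤ 0 := hpolar t ht' _ (hpC (t + 1) ht)
        rw [real_inner_comm]
        have := mul_nonpos_of_nonneg_of_nonpos (hSpos t ht').le h1
        nlinarith [hSpos (t + 1) ht]
      have h := hkey (t + 1) ht _ hq
      have harg : (∑ j ∈ Finset.range (t + 2), ω j) • u (t + 1)
          - (∑ j ∈ Finset.range (t + 1), ω j) • (u t - p t)
          = (∑ j ∈ Finset.range (t + 1), ω j) • p t + ω (t + 1) • v (t + 1) := by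
        rw [hWu (t + 1) ht, smul_sub, hWu t ht']
        rw [Finset.sum_range_succ (f := fun j => ω j • v j)]
        abel
      rw [harg] at h
      have hexp : ‖(∑ j ∈ Finset.range (t + 1), ω j) • p t + ω (t + 1) • v (t + 1)‖ ^ 2
          = ‖(∑ j ∈ Finset.range (t + 1), ω j) • p t‖ ^ 2
            + ω (t + 1) ^ 2 * ‖v (t + 1)‖ ^ 2 := by
        rw [norm_add_sq_real, real_inner_smul_left, real_inner_smul_right,
          hcross t ht, norm_smul, norm_smul, mul_pow, mul_pow, Real.norm_eq_abs,
          Real.norm_eq_abs, sq_abs, sq_abs]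
        ring
      rw [hexp] at h
      rw [Finset.sum_range_succ (f := fun j => ω j ^ 2 * ‖v j‖ ^ 2)]
      have := ih ht'
      linarith
  -- final assembly
  obtain ⟨N, rfl⟩ : ∃ N, T = N + 1 := ⟨T - 1, by omega⟩
  have hNT : N < N + 1 := Nat.lt_succ_self N
  have hsum2 : ∑ j ∈ Finset.range (N + 1), ω j ^ 2 * ‖v j‖ ^ 2
      ≤ 2 * L ^ 2 * ∑ j ∈ Finset.range (N + 1), ω j ^ 2 := by
    rw [Finset.mul_sum]
    apply Finset.sum_le_sum
    intro j hj
    have := hvbd j (Finset.mem_range.1 hj)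
    nlinarith [sq_nonneg (ω j)]
  set B := Real.sqrt (∑ t ∈ Finset.range (N + 1), ω t ^ 2) with hBdef
  have hB0 : 0 ≤ B := Real.sqrt_nonneg _
  have hB2 : B ^ 2 = ∑ t ∈ Finset.range (N + 1), ω t ^ 2 :=
    Real.sq_sqrt (Finset.sum_nonneg fun j _ => sq_nonneg _)
  have hm2 : ‖(∑ j ∈ Finset.range (N + 1), ω j) • p N‖ ^ 2 ≤ 2 * L ^ 2 * B ^ 2 := by
    rw [hB2]; exact (hmain N hNT).trans hsum2
  have hmB : ‖(∑ j ∈ Finset.range (N + 1), ω j) • p N‖ ≤ Real.sqrt 2 * L * B := by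
    have h1 : ‖(∑ j ∈ Finset.range (N + 1), ω j) • p N‖
        = Real.sqrt (‖(∑ j ∈ Finset.range (N + 1), ω j) • p N‖ ^ 2) :=
      (Real.sqrt_sq (norm_nonneg _)).symm
    rw [h1]
    refine le_trans (Real.sqrt_le_sqrt hm2) (le_of_eq ?_)
    rw [show (2 : ℝ) * L ^ 2 * B ^ 2 = 2 * (L * B) ^ 2 by ring,
      Real.sqrt_mul (by norm_num), Real.sqrt_sq (mul_nonneg hL0 hB0)]
    ring
  have hxbd : ∀ z ∈ X, (∑ t ∈ Finset.range (N + 1), ω t * ⟪f t, x t⟫)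
      - (∑ t ∈ Finset.range (N + 1), ω t * ⟪f t, z⟫) ≤ 4 * κ * L * B := by
    intro z hz
    obtain ⟨c, hc⟩ : ∃ c : Rone n, c = (WithLp.toLp 2 (κ, z) : Rone n) := ⟨_, rfl⟩
    have hzC : c ∈ coneOf n κ X := by
      have := hCmem 1 one_pos.le z hz
      rwa [one_smul, ← hc] at this
    have hc1 : c.ofLp.1 = κ := by rw [hc]
    have hc2 : c.ofLp.2 = z := by rw [hc]
    have hrep : (∑ t ∈ Finset.range (N + 1), ω t * ⟪f t, x t⟫)
        - (∑ t ∈ Finset.range (N + 1), ω t * ⟪f t, z⟫)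
        = ⟪c, ∑ j ∈ Finset.range (N + 1), ω j • v j⟫ := by
      rw [inner_sum, ← Finset.sum_sub_distrib]
      apply Finset.sum_congr rfl
      intro j hj
      rw [real_inner_smul_right, hv j (Finset.mem_range.1 hj), Rone.inner_eq, hc1, hc2]
      show ω j * ⟪f j, x j⟫ - ω j * ⟪f j, z⟫
        = ω j * (κ * (⟪f j, x j⟫ / κ) + ⟪z, -f j⟫)
      rw [inner_neg_right, real_inner_comm z (f j)]
      field_simp
      ring
    rw [hrep, ← hWu N hNT]
    have hdecomp : (∑ j ∈ Finset.range (N + 1), ω j) • u N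
        = (∑ j ∈ Finset.range (N + 1), ω j) • p N
          + (∑ j ∈ Finset.range (N + 1), ω j) • (u N - p N) := by
      rw [← smul_add]; congr 1; abel
    rw [hdecomp, inner_add_right]
    have hneg : ⟪c, (∑ j ∈ Finset.range (N + 1), ω j) • (u N - p N)⟫ ≤ 0 := by
      rw [real_inner_smul_right, real_inner_comm]
      exact mul_nonpos_of_nonneg_of_nonpos (hSpos N hNT).le (hpolar N hNT _ hzC)
    have hcz : ‖c‖ ≤ Real.sqrt 2 * κ := by
      have h1 : ‖c‖ ^ 2 ≤ 2 * κ ^ 2 := by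
        rw [Rone.norm_sq, hc1, hc2]
        have hzκ : ‖z‖ ≤ κ := hκ.2 ⟨z, hz, rfl⟩
        have hz2 : ‖z‖ ^ 2 ≤ κ ^ 2 := pow_le_pow_left₀ (norm_nonneg z) hzκ 2
        linarith only [hz2]
      have h2 : ‖c‖ = Real.sqrt (‖c‖ ^ 2) := (Real.sqrt_sq (norm_nonneg _)).symm
      rw [h2]
      refine le_trans (Real.sqrt_le_sqrt h1) (le_of_eq ?_)
      rw [Real.sqrt_mul (by norm_num), Real.sqrt_sq hκpos.le]
    have hinner : ⟪c, (∑ j ∈ Finset.range (N + 1), ω j) • p N⟫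
        ≤ (Real.sqrt 2 * κ) * (Real.sqrt 2 * L * B) := by
      refine le_trans (real_inner_le_norm _ _) ?_
      exact mul_le_mul hcz hmB (norm_nonneg _)
        (mul_nonneg (Real.sqrt_nonneg 2) hκpos.le)
    have hs2 : Real.sqrt 2 * Real.sqrt 2 = 2 :=
      Real.mul_self_sqrt (by norm_num)
    have hfin : (Real.sqrt 2 * κ) * (Real.sqrt 2 * L * B) = 2 * κ * L * B := by
      rw [show (Real.sqrt 2 * κ) * (Real.sqrt 2 * L * B)
        = (Real.sqrt 2 * Real.sqrt 2) * (κ * L * B) by ring, hs2]; ring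
    linarith only [hinner, hneg, hfin, mul_nonneg (mul_nonneg hκpos.le hL0) hB0]
  have himgne : ((fun z => ∑ t ∈ Finset.range (N + 1), ω t * ⟪f t, z⟫) '' X).Nonempty :=
    ⟨_, Set.mem_image_of_mem _ hx0⟩
  have hinf : (∑ t ∈ Finset.range (N + 1), ω t * ⟪f t, x t⟫) - 4 * κ * L * B
      ≤ sInf ((fun z => ∑ t ∈ Finset.range (N + 1), ω t * ⟪f t, z⟫) '' X) := by
    apply le_csInf himgne
    rintro b ⟨z, hz, rfl⟩
    have h := hxbd z hz
    dsimp only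
    linarith only [h]
  linarith
end
end

section
/- Let C ⊆ ℝ^{1+n} be a nonempty closed convex cone with polar cone C° and metric projection π_C. Let (v_t)_{t≥1} ⊆ ℝ^{1+n} be any sequence, let ω_1, ω_2, … > 0 with partial sums S_t = Σ_{τ=1}^t ω_τ, and define the CBA⁺ aggregates u_1 = π_C(v_1) and u_{t+1} = π_C( (S_t·u_t + ω_{t+1}·v_{t+1}) / S_{t+1} ) for t ≥ 1, and the true weighted averages R_t = (1/S_t) Σ_{τ=1}^t ω_τ v_τ. Then for every t ≥ 1, R_t − u_t ∈ C°, i.e., u_t ≤_{C°} R_t; consequently dist(R_t, C°) ≤ ‖u_t‖. -/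
open scoped RealInnerProductSpace
open Finset

noncomputable section

/-- Variational inequality for a nearest point in a convex set. -/
lemma isProjOn_inner_le {H : Type*} [NormedAddCommGroup H] [InnerProductSpace ℝ H]
    {C : Set H} (hconv : Convex ℝ C) {x p : H} (h : IsProjOn C x p) :
    ∀ w ∈ C, ⟪x - p, w - p⟫ ≤ 0 := by
  have hp : p ∈ C := h.1
  haveI : Nonempty C := ⟨⟨p, hp⟩⟩
  have hinf : ‖x - p‖ = ⨅ w : C, ‖x - w‖ := by
    refine le_antisymm (le_ciInf fun w => h.2 w w.2) ?_
    exact ciInf_le ⟨0, fun a ⟨w, hw⟩ => hw ▸ norm_nonneg _⟩ (⟨p, hp⟩ : C)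
  exact (norm_eq_iInf_iff_real_inner_le_zero hconv hp).mp hinf

/-- Projection onto a convex cone: the residual lies in the polar cone. -/
lemma isProjOn_cone_mem_polar {H : Type*} [NormedAddCommGroup H] [InnerProductSpace ℝ H]
    {C : Set H} (hconv : Convex ℝ C)
    (hcone : ∀ c : ℝ, 0 ≤ c → ∀ z ∈ C, c • z ∈ C)
    {x p : H} (h : IsProjOn C x p) :
    ∀ w ∈ C, ⟪x - p, w⟫ ≤ 0 := by
  intro w hw
  have hpw : p + w ∈ C := by
    have hmid : (1/2 : ℝ) • p + (1/2 : ℝ) • w ∈ C := by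
      have := hconv h.1 hw (by norm_num : (0:ℝ) ≤ 1/2) (by norm_num : (0:ℝ) ≤ 1/2)
        (by norm_num)
      simpa using this
    have := hcone 2 (by norm_num) _ hmid
    simpa [smul_add, smul_smul] using this
  have := isProjOn_inner_le hconv h (p + w) hpw
  simpa using this

/-- the projected aggregate `u` of CBA⁺ with weights `ω` dominates the true
weighted average payoff `R` in the order induced by the polar cone `C°`:
`R_t − u_t ∈ C°` for every `t`, and consequently `dist(R_t, C°) ≤ ‖u_t‖`.
Sequences are indexed from `0` (index `t` is round `t+1`). -/
theorem cbaPlus_aggregate_dominates_average (n : ℕ) (C : Set (Rone n))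
    (hne : C.Nonempty) (hclosed : IsClosed C) (hconv : Convex ℝ C)
    (hcone : ∀ c : ℝ, 0 ≤ c → ∀ z ∈ C, c • z ∈ C)
    (ω : ℕ → ℝ) (hω : ∀ t, 0 < ω t)
    (v u R : ℕ → Rone n)
    (hu0 : IsProjOn C (v 0) (u 0))
    (hurec : ∀ t : ℕ,
      IsProjOn C
        ((∑ j ∈ Finset.range (t + 2), ω j)⁻¹ •
          ((∑ j ∈ Finset.range (t + 1), ω j) • u t + ω (t + 1) • v (t + 1)))
        (u (t + 1)))
    (hR : ∀ t : ℕ, R t = (∑ j ∈ Finset.range (t + 1), ω j)⁻¹ •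
      ∑ j ∈ Finset.range (t + 1), ω j • v j) :
    ∀ t : ℕ,
      R t - u t ∈ {z : Rone n | ∀ w ∈ C, ⟪z, w⟫ ≤ 0} ∧
      Metric.infDist (R t) {z : Rone n | ∀ w ∈ C, ⟪z, w⟫ ≤ 0} ≤ ‖u t‖ := by
  set P : Set (Rone n) := {z : Rone n | ∀ w ∈ C, ⟪z, w⟫ ≤ 0} with hP
  have hS : ∀ t : ℕ, (0 : ℝ) < ∑ j ∈ Finset.range (t + 1), ω j := fun t =>
    Finset.sum_pos (fun j _ => hω j) (by simp)
  have key : ∀ t : ℕ, R t - u t ∈ P := by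
    intro t
    induction t with
    | zero =>
      have h0 : R 0 = v 0 := by
        rw [hR 0]
        simp [inv_smul_smul₀ (hω 0).ne']
      rw [h0]
      exact fun w hw => isProjOn_cone_mem_polar hconv hcone hu0 w hw
    | succ t ih =>
      set S1 : ℝ := ∑ j ∈ Finset.range (t + 1), ω j
      set S2 : ℝ := ∑ j ∈ Finset.range (t + 2), ω j
      have hS1 : (0:ℝ) < S1 := hS t
      have hS2 : (0:ℝ) < S2 := hS (t + 1)
      set x : Rone n := S2⁻¹ • (S1 • u t + ω (t + 1) • v (t + 1))
      have hsum : ∑ j ∈ Finset.range (t + 1), ω j • v j = S1 • R t := by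
        rw [hR t, smul_smul, mul_inv_cancel₀ hS1.ne', one_smul]
      have hR2 : R (t + 1) = S2⁻¹ • (S1 • R t + ω (t + 1) • v (t + 1)) := by
        have hv : ∑ j ∈ Finset.range (t + 2), ω j • v j
            = S1 • R t + ω (t + 1) • v (t + 1) := by
          rw [Finset.sum_range_succ, hsum]
        rw [hR (t + 1), hv]
      have hdiff : R (t + 1) - u (t + 1)
          = (x - u (t + 1)) + (S2⁻¹ * S1) • (R t - u t) := by
        rw [hR2]
        simp only [x, smul_add, smul_sub, smul_smul]
        abel
      intro w hw
      rw [hdiff, inner_add_left, real_inner_smul_left]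
      have h1 : ⟪x - u (t + 1), w⟫ ≤ 0 :=
        isProjOn_cone_mem_polar hconv hcone (hurec t) w hw
      have h2 : ⟪R t - u t, w⟫ ≤ 0 := ih w hw
      have h3 : (0:ℝ) ≤ S2⁻¹ * S1 := by positivity
      nlinarith
  intro t
  refine ⟨key t, ?_⟩
  have : Metric.infDist (R t) P ≤ dist (R t) (R t - u t) :=
    Metric.infDist_le_dist_of_mem (key t)
  simpa [dist_eq_norm] using this
end
end
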